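/- Given any program Π, any epistemic splitting set U of Π and any splitting ⟨B_U(Π),T_U(Π)⟩, a total belief view W is a FEEL-world view of Π if and only if W|_U is a FEEL-world view of B_U(Π) and W|_Ū is a FEEL-world view of E_U(Π, W|_U). -/
import Mathlib


namespace Epist

attribute [local instance] Classical.propDecidable

/-- Epistemic formulas over a set (type) of atoms `α`. -/
inductive EForm (α : Type) : Type where
  | bot : EForm α
  | atom : α → EForm α
  | and : EForm α → EForm α → EForm α
  | or : EForm α → EForm α → EForm α
  | imp : EForm α → EForm α → EForm α
  | K : EForm α → EForm α

variable {α : Type}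

/-- ¬φ abbreviates φ → ⊥. -/
def EForm.neg (φ : EForm α) : EForm α := .imp φ .bot

/-- ⊤ abbreviates ¬⊥. -/
def EForm.top : EForm α := EForm.neg .bot

/-- Atoms occurring in a formula. -/
def EForm.atoms : EForm α → Set α
  | .bot => ∅
  | .atom a => {a}
  | .and φ ψ => φ.atoms ∪ ψ.atoms
  | .or φ ψ => φ.atoms ∪ ψ.atoms
  | .imp φ ψ => φ.atoms ∪ ψ.atoms
  | .K φ => φ.atoms

/-- A belief view: a set of HT-interpretations ⟨H,T⟩ (as pairs of sets of atoms). -/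
abbrev BView (α : Type) := Set (Set α × Set α)

/-- W^t : the total belief view {⟨T,T⟩ : ⟨H,T⟩ ∈ W}. -/
def tview (W : BView α) : BView α := (fun i => (i.2, i.2)) '' W

/-- Wellformedness of a belief view: nonempty and H ⊆ T for all members. -/
def isBView (W : BView α) : Prop := W.Nonempty ∧ ∀ i ∈ W, i.1 ⊆ i.2

/-- A belief view is total when all its HT-interpretations are total. -/
def totalView (W : BView α) : Prop := ∀ i ∈ W, i.1 = i.2

/-- Satisfaction of an epistemic formula by a belief interpretation ⟨W,H,T⟩. -/
def sat : EForm α → BView α → Set α → Set α → Prop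
  | .bot, _, _, _ => False
  | .atom a, _, H, _ => a ∈ H
  | .and φ ψ, W, H, T => sat φ W H T ∧ sat ψ W H T
  | .or φ ψ, W, H, T => sat φ W H T ∨ sat ψ W H T
  | .imp φ ψ, W, H, T =>
      (sat φ W H T → sat ψ W H T) ∧ (sat φ (tview W) T T → sat ψ (tview W) T T)
  | .K φ, W, _, _ => ∀ i ∈ W, sat φ W i.1 i.2

/-- ⟨W,H',T'⟩ ⊨ φ for all ⟨H',T'⟩ ∈ W. -/
def epSat (W : BView α) (φ : EForm α) : Prop := ∀ i ∈ W, sat φ W i.1 i.2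

/-- W is an epistemic model of the theory Γ. -/
def epModel (W : BView α) (Γ : Set (EForm α)) : Prop :=
  isBView W ∧ ∀ φ ∈ Γ, epSat W φ

/-- ⟨W,H,T⟩ is a belief model of the theory Γ. -/
def beliefModel (W : BView α) (H T : Set α) (Γ : Set (EForm α)) : Prop :=
  isBView W ∧ H ⊆ T ∧ (∀ φ ∈ Γ, sat φ W H T) ∧ ∀ φ ∈ Γ, epSat W φ

/-- Order ⪯ on belief interpretations: ⟨W',H',T'⟩ ⪯ ⟨W,H,T⟩. -/
def biLE (W' : BView α) (H' T' : Set α) (W : BView α) (H T : Set α) : Prop :=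
  (T' = T ∧ H' ⊆ H) ∧
  (∀ i ∈ W, ∃ H₁, (H₁, i.2) ∈ W' ∧ H₁ ⊆ i.1) ∧
  (∀ i ∈ W', ∃ H₁, (H₁, i.2) ∈ W ∧ i.1 ⊆ H₁)

/-- Strict order ≺ on belief interpretations. -/
def biLT (W' : BView α) (H' T' : Set α) (W : BView α) (H T : Set α) : Prop :=
  biLE W' H' T' W H T ∧ (W', H', T') ≠ (W, H, T)

/-- Order ⪯ on belief views. -/
def viewLE (W₁ W₂ : BView α) : Prop :=
  (∀ i ∈ W₂, ∃ H₁, (H₁, i.2) ∈ W₁ ∧ H₁ ⊆ i.1) ∧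
  (∀ i ∈ W₁, ∃ H₂, (H₂, i.2) ∈ W₂ ∧ i.1 ⊆ H₂)

/-- Strict order ≺ on belief views. -/
def viewLT (W₁ W₂ : BView α) : Prop := viewLE W₁ W₂ ∧ W₁ ≠ W₂

/-- ⟨W,T⟩ is an equilibrium belief model of Γ. -/
def eqBeliefModel (Γ : Set (EForm α)) (W : BView α) (T : Set α) : Prop :=
  totalView W ∧ beliefModel W T T Γ ∧
  ∀ W' H' T', beliefModel W' H' T' Γ → ¬ biLT W' H' T' W T T

/-- ⟨W,T⟩ is a weak equilibrium belief model of Γ: no belief-total (i.e. with total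
view) belief model of Γ is ≺-smaller. -/
def weakEqBeliefModel (Γ : Set (EForm α)) (W : BView α) (T : Set α) : Prop :=
  totalView W ∧ beliefModel W T T Γ ∧
  ∀ W' H' T', totalView W' → beliefModel W' H' T' Γ → ¬ biLT W' H' T' W T T

/-- Identification of a set of propositional interpretations with a total belief view. -/
def ofSets (S : Set (Set α)) : BView α := (fun T => (T, T)) '' S

/-- W is a FAEEL-world view of Γ iff W = { T : ⟨W,T⟩ is an equilibrium belief model }. -/
def FAEEL (Γ : Set (EForm α)) (W : BView α) : Prop :=
  isBView W ∧ totalView W ∧ W = ofSets {T | eqBeliefModel Γ W T}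

/-- W is a weak autoepistemic world view of Γ. -/
def weakAEWorldView (Γ : Set (EForm α)) (W : BView α) : Prop :=
  isBView W ∧ totalView W ∧ W = ofSets {T | weakEqBeliefModel Γ W T}

/-- W is a FEEL-world view of Γ. -/
def FEEL (Γ : Set (EForm α)) (W : BView α) : Prop :=
  totalView W ∧ epModel W Γ ∧ ∀ W', epModel W' Γ → ¬ viewLT W' W

/-- A belief view is simple iff ⟨H,T⟩,⟨H',T⟩ ∈ W imply H = H'. -/
def simpleView (W : BView α) : Prop := ∀ i ∈ W, ∀ j ∈ W, i.2 = j.2 → i.1 = j.1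

/-- W is an EEL-world view of Γ. -/
def EEL (Γ : Set (EForm α)) (W : BView α) : Prop :=
  totalView W ∧ epModel W Γ ∧
  ¬ ∃ W', simpleView W' ∧ epModel W' Γ ∧ tview W' = W ∧ ∃ i ∈ W', i.1 ⊂ i.2

/-- Ordinary here-and-there satisfaction (for objective, i.e. K-free, formulas). -/
def htSat (φ : EForm α) (H T : Set α) : Prop := sat φ (∅ : BView α) H T

/-- T is a stable model of the (objective) theory Δ. -/
def stableModel (Δ : Set (EForm α)) (T : Set α) : Prop :=
  (∀ φ ∈ Δ, htSat φ T T) ∧ ∀ H, H ⊂ T → ¬ ∀ φ ∈ Δ, htSat φ H T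

/-- SM[Δ] : the set of stable models of Δ. -/
def SMset (Δ : Set (EForm α)) : Set (Set α) := {T | stableModel Δ T}

/-- Subjective reduct of a formula w.r.t. a belief view W and a signature U:
each maximal subformula Kφ with Atoms(φ) ⊆ U is replaced by ⊤ if W ⊨ Kφ
and by ⊥ otherwise. -/
noncomputable def reduct (W : BView α) (U : Set α) : EForm α → EForm α
  | .bot => .bot
  | .atom a => .atom a
  | .and φ ψ => .and (reduct W U φ) (reduct W U ψ)
  | .or φ ψ => .or (reduct W U φ) (reduct W U ψ)
  | .imp φ ψ => .imp (reduct W U φ) (reduct W U ψ)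
  | .K φ =>
      if φ.atoms ⊆ U then (if epSat W (.K φ) then EForm.top else .bot)
      else .K (reduct W U φ)

/-- W is a G91-world view of Γ iff W = SM[Γ^W]. -/
def G91 (Γ : Set (EForm α)) (W : BView α) : Prop :=
  isBView W ∧ totalView W ∧ W = ofSets (SMset (reduct W Set.univ '' Γ))

/-- Negatively subjective reduct: each maximal subformula ¬Kφ is replaced
by ⊤ if W ⊭ Kφ and by ⊥ otherwise. -/
noncomputable def negReduct (W : BView α) : EForm α → EForm α
  | .bot => .bot
  | .atom a => .atom a
  | .and φ ψ => .and (negReduct W φ) (negReduct W ψ)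
  | .or φ ψ => .or (negReduct W φ) (negReduct W ψ)
  | .imp (.K φ) .bot => if epSat W (.K φ) then .bot else EForm.top
  | .imp φ ψ => .imp (negReduct W φ) (negReduct W ψ)
  | .K φ => .K (negReduct W φ)

/-- Atom, ⊤ or ⊥. -/
def isAtomBase (φ : EForm α) : Prop := (∃ a, φ = .atom a) ∨ φ = EForm.top ∨ φ = .bot

/-- Objective literals: l, ¬l or ¬¬l for l an atom, ⊤ or ⊥. -/
def isObjLit (φ : EForm α) : Prop :=
  isAtomBase φ ∨ (∃ ψ, isAtomBase ψ ∧ φ = EForm.neg ψ) ∨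
    (∃ ψ, isAtomBase ψ ∧ φ = EForm.neg (EForm.neg ψ))

/-- Subjective literals: Kl, ¬Kl or ¬¬Kl for l an objective literal. -/
def isSubjLit (φ : EForm α) : Prop :=
  (∃ l, isObjLit l ∧ φ = .K l) ∨ (∃ l, isObjLit l ∧ φ = EForm.neg (.K l)) ∨
    (∃ l, isObjLit l ∧ φ = EForm.neg (EForm.neg (.K l)))

/-- Positive subjective literals: Kl. -/
def isPosSubjLit (φ : EForm α) : Prop := ∃ l, isObjLit l ∧ φ = .K l

/-- A rule: a head disjunction of atoms and a body list of literals. -/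
structure ERule (α : Type) where
  head : List α
  body : List (EForm α)

/-- Wellformedness of a rule: every body member is an (objective or subjective) literal. -/
def ERule.wf (r : ERule α) : Prop := ∀ φ ∈ r.body, isObjLit φ ∨ isSubjLit φ

/-- Disjunction of atoms (⊥ when empty). -/
def disjForm : List α → EForm α
  | [] => .bot
  | a :: l => .or (.atom a) (disjForm l)

/-- Conjunction of formulas (⊤ when empty). -/
def conjForm : List (EForm α) → EForm α
  | [] => EForm.top
  | φ :: l => .and φ (conjForm l)

/-- The formula Head(r) ← Body(r) corresponding to a rule. -/
def ERule.form (r : ERule α) : EForm α := .imp (conjForm r.body) (disjForm r.head)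

/-- Atoms of Head(r). -/
def ERule.headAtoms (r : ERule α) : Set α := {a | a ∈ r.head}

/-- Atoms of Body_obj(r). -/
def ERule.objBodyAtoms (r : ERule α) : Set α := {a | ∃ φ ∈ r.body, isObjLit φ ∧ a ∈ φ.atoms}

/-- Atoms of Body_sub(r). -/
def ERule.subjBodyAtoms (r : ERule α) : Set α := {a | ∃ φ ∈ r.body, isSubjLit φ ∧ a ∈ φ.atoms}

/-- Atoms of Body⁺_sub(r). -/
def ERule.posSubjBodyAtoms (r : ERule α) : Set α :=
  {a | ∃ φ ∈ r.body, isPosSubjLit φ ∧ a ∈ φ.atoms}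

/-- Atoms(r). -/
def ERule.atoms (r : ERule α) : Set α := r.headAtoms ∪ {a | ∃ φ ∈ r.body, a ∈ φ.atoms}

/-- A rule is objective if all its body literals are objective. -/
def ERule.objective (r : ERule α) : Prop := ∀ φ ∈ r.body, isObjLit φ

/-- A program is a set of rules. -/
abbrev EProgram (α : Type) := Set (ERule α)

def progWF (P : EProgram α) : Prop := ∀ r ∈ P, r.wf

/-- The theory consisting of the formulas of the rules of a program. -/
def progTheory (P : EProgram α) : Set (EForm α) := ERule.form '' P

def progAtoms (P : EProgram α) : Set α := {a | ∃ r ∈ P, a ∈ r.atoms}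

def progObjective (P : EProgram α) : Prop := ∀ r ∈ P, r.objective

/-- U is an epistemic splitting set of P. -/
def splittingSet (P : EProgram α) (U : Set α) : Prop :=
  ∀ r ∈ P, r.atoms ⊆ U ∨ (r.objBodyAtoms ∪ r.headAtoms) ∩ U = ∅

/-- ⟨B,Tp⟩ is a splitting of P w.r.t. U. -/
def isSplitting (P : EProgram α) (U : Set α) (B Tp : EProgram α) : Prop :=
  B ∩ Tp = ∅ ∧ B ∪ Tp = P ∧ (∀ r ∈ B, r.atoms ⊆ U) ∧
    ∀ r ∈ Tp, (r.objBodyAtoms ∪ r.headAtoms) ∩ U = ∅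

/-- Subjective reduct of a rule. -/
noncomputable def ruleReduct (W : BView α) (U : Set α) (r : ERule α) : ERule α :=
  ⟨r.head, r.body.map (reduct W U)⟩

/-- E_U(Π,W) := (T_U(Π))^W_U, here taking the top part Tp as argument. -/
noncomputable def EU (Tp : EProgram α) (W : BView α) (U : Set α) : EProgram α :=
  ruleReduct W U '' Tp

/-- W_b ⊔ W_t (for total belief views: pointwise unions). -/
def vjoin (W₁ W₂ : BView α) : BView α :=
  {i | ∃ j ∈ W₁, ∃ k ∈ W₂, i = (j.1 ∪ k.1, j.2 ∪ k.2)}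

/-- W|_U (for total belief views: pointwise intersection with U). -/
def vrestrict (W : BView α) (U : Set α) : BView α :=
  {i | ∃ j ∈ W, i = (j.1 ∩ U, j.2 ∩ U)}

/-- Epistemic dependence dep(a,b). -/
def dep (P : EProgram α) (a b : α) : Prop :=
  ∃ r ∈ P, a ∈ r.headAtoms ∪ r.objBodyAtoms ∧ b ∈ r.subjBodyAtoms

/-- Positive epistemic dependence dep⁺(a,b). -/
def depPos (P : EProgram α) (a b : α) : Prop :=
  ∃ r ∈ P, a ∈ r.headAtoms ∪ r.objBodyAtoms ∧ b ∈ r.posSubjBodyAtoms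

/-- P is epistemically stratified. -/
def stratified (P : EProgram α) : Prop :=
  ∃ lam : α → ℕ,
    (∀ r ∈ P, ∀ a ∈ r.atoms \ r.subjBodyAtoms, ∀ b ∈ r.atoms \ r.subjBodyAtoms,
      lam a = lam b) ∧
    ∀ a b, dep P a b → lam a > lam b

/-- P is epistemically tight. -/
def tight (P : EProgram α) : Prop :=
  ∃ lam : α → ℕ,
    (∀ r ∈ P, ∀ a ∈ r.atoms \ r.subjBodyAtoms, ∀ b ∈ r.atoms \ r.subjBodyAtoms,
      lam a = lam b) ∧
    ∀ a b, depPos P a b → lam a > lam b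

/-- A semantics S satisfies the epistemic splitting property. -/
def satisfiesSplitting (S : EProgram α → BView α → Prop) : Prop :=
  ∀ P : EProgram α, progWF P → ∀ U : Set α, splittingSet P U →
    ∀ B Tp : EProgram α, isSplitting P U B Tp →
      ∀ W : BView α,
        S P W ↔ ∃ Wb Wt, S B Wb ∧ S (EU Tp Wb U) Wt ∧ W = vjoin Wb Wt

/-- A semantics S satisfies supra-ASP. -/
def supraASP (S : EProgram α → BView α → Prop) : Prop :=
  ∀ P : EProgram α, progWF P → progObjective P →
    (SMset (progTheory P) ≠ ∅ ∧ ∀ W, (S P W ↔ W = ofSets (SMset (progTheory P)))) ∨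
    (SMset (progTheory P) = ∅ ∧ ∀ W, ¬ S P W)

end Epist
namespace Epist
section Lemmas
variable {α : Type}

lemma mem_vrestrict {V : BView α} {S : Set α} {i : Set α × Set α} :
    i ∈ vrestrict V S ↔ ∃ j ∈ V, i = (j.1 ∩ S, j.2 ∩ S) := Iff.rfl

lemma mem_vrestrict_of {V : BView α} {S : Set α} {j : Set α × Set α} (hj : j ∈ V) :
    (j.1 ∩ S, j.2 ∩ S) ∈ vrestrict V S := ⟨j, hj, rfl⟩

lemma tview_idem (V : BView α) : tview (tview V) = tview V := by
  simp [tview, Set.image_image]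

lemma tview_eq_self {V : BView α} (h : totalView V) : tview V = V := by
  ext i
  constructor
  · rintro ⟨j, hj, rfl⟩
    have hj2 := h j hj
    show (j.2, j.2) ∈ V
    have : (j.2, j.2) = j := by simp [Prod.ext_iff, hj2]
    rwa [this]
  · intro hi
    refine ⟨i, hi, ?_⟩
    show (i.2, i.2) = i
    simp [Prod.ext_iff, h i hi]

lemma totalView_tview (V : BView α) : totalView (tview V) := by
  rintro i ⟨j, hj, rfl⟩; rfl

lemma totalView_vrestrict {V : BView α} (h : totalView V) (S : Set α) :
    totalView (vrestrict V S) := by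
  rintro i ⟨j, hj, rfl⟩; simp [h j hj]

lemma tview_vrestrict (V : BView α) (S : Set α) :
    tview (vrestrict V S) = vrestrict (tview V) S := by
  ext i
  constructor
  · rintro ⟨j, ⟨k, hk, rfl⟩, rfl⟩
    exact ⟨(k.2, k.2), ⟨k, hk, rfl⟩, rfl⟩
  · rintro ⟨j, ⟨k, hk, rfl⟩, rfl⟩
    exact ⟨(k.1 ∩ S, k.2 ∩ S), ⟨k, hk, rfl⟩, rfl⟩

lemma sat_top (V : BView α) (H T : Set α) : sat EForm.top V H T := by
  simp [EForm.top, EForm.neg, sat]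

lemma sat_restrict {S : Set α} :
    ∀ (φ : EForm α), φ.atoms ⊆ S → ∀ (V : BView α) (H T : Set α),
      (sat φ V H T ↔ sat φ (vrestrict V S) (H ∩ S) (T ∩ S)) := by
  intro φ
  induction φ with
  | bot => intro _ V H T; exact Iff.rfl
  | atom a =>
      intro h V H T
      have ha : a ∈ S := h (by simp [EForm.atoms])
      simp [sat, ha]
  | and φ ψ ihφ ihψ =>
      intro h V H T
      have h1 : φ.atoms ⊆ S := fun a ha => h (Or.inl ha)
      have h2 : ψ.atoms ⊆ S := fun a ha => h (Or.inr ha)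
      simp only [sat]
      exact and_congr (ihφ h1 V H T) (ihψ h2 V H T)
  | or φ ψ ihφ ihψ =>
      intro h V H T
      have h1 : φ.atoms ⊆ S := fun a ha => h (Or.inl ha)
      have h2 : ψ.atoms ⊆ S := fun a ha => h (Or.inr ha)
      simp only [sat]
      exact or_congr (ihφ h1 V H T) (ihψ h2 V H T)
  | imp φ ψ ihφ ihψ =>
      intro h V H T
      have h1 : φ.atoms ⊆ S := fun a ha => h (Or.inl ha)
      have h2 : ψ.atoms ⊆ S := fun a ha => h (Or.inr ha)
      simp only [sat]
      rw [tview_vrestrict]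
      exact and_congr (imp_congr (ihφ h1 V H T) (ihψ h2 V H T))
        (imp_congr (ihφ h1 (tview V) T T) (ihψ h2 (tview V) T T))
  | K φ ih =>
      intro h V H T
      have h1 : φ.atoms ⊆ S := h
      simp only [sat]
      constructor
      · rintro hall j ⟨k, hk, rfl⟩
        exact (ih h1 V k.1 k.2).1 (hall k hk)
      · intro hall i hi
        exact (ih h1 V i.1 i.2).2 (hall _ (mem_vrestrict_of hi))

lemma sat_persist :
    ∀ (φ : EForm α) (V : BView α) (H T : Set α),
      (∀ i ∈ V, i.1 ⊆ i.2) → H ⊆ T → sat φ V H T → sat φ (tview V) T T := by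
  intro φ
  induction φ with
  | bot => intro V H T _ _ h; exact h
  | atom a => intro V H T _ hHT h; exact hHT h
  | and φ ψ ihφ ihψ =>
      intro V H T hwf hHT h
      exact ⟨ihφ V H T hwf hHT h.1, ihψ V H T hwf hHT h.2⟩
  | or φ ψ ihφ ihψ =>
      intro V H T hwf hHT h
      rcases h with h | h
      · exact Or.inl (ihφ V H T hwf hHT h)
      · exact Or.inr (ihψ V H T hwf hHT h)
  | imp φ ψ ihφ ihψ =>
      intro V H T hwf hHT h
      refine ⟨h.2, ?_⟩
      rw [tview_idem]
      exact h.2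
  | K φ ih =>
      intro V H T hwf hHT h
      rintro j ⟨k, hk, rfl⟩
      exact ih V k.1 k.2 hwf (hwf k hk) (h k hk)

def noK : EForm α → Prop
  | .bot => True
  | .atom _ => True
  | .and φ ψ => noK φ ∧ noK ψ
  | .or φ ψ => noK φ ∧ noK ψ
  | .imp φ ψ => noK φ ∧ noK ψ
  | .K _ => False

lemma reduct_noK {W : BView α} {U : Set α} :
    ∀ {φ : EForm α}, noK φ → reduct W U φ = φ := by
  intro φ
  induction φ with
  | bot => intro _; rfl
  | atom a => intro _; rfl
  | and φ ψ ihφ ihψ => intro h; simp only [reduct, ihφ h.1, ihψ h.2]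
  | or φ ψ ihφ ihψ => intro h; simp only [reduct, ihφ h.1, ihψ h.2]
  | imp φ ψ ihφ ihψ => intro h; simp only [reduct, ihφ h.1, ihψ h.2]
  | K φ ih => intro h; exact absurd h (by simp [noK])

lemma satK_iff_epSat {X : BView α} {l : EForm α} {h t : Set α} :
    sat (.K l) X h t ↔ epSat X (.K l) := by
  constructor
  · intro hs j _; exact hs
  · intro he i hi; exact he i hi i hi

inductive Good (U : Set α) : EForm α → Prop
  | base {φ} : noK φ → φ.atoms ⊆ Uᶜ → Good U φ
  | and_ {φ ψ} : Good U φ → Good U ψ → Good U (.and φ ψ)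
  | or_ {φ ψ} : Good U φ → Good U ψ → Good U (.or φ ψ)
  | imp_ {φ ψ} : Good U φ → Good U ψ → Good U (.imp φ ψ)
  | Kin {l} : noK l → l.atoms ⊆ U → Good U (.K l)
  | Kout {l} : noK l → l.atoms ⊆ Uᶜ → Good U (.K l)

lemma sat_reduct_K {U : Set α} {Wu : BView α} (hWu : totalView Wu)
    {l : EForm α} (hl : l.atoms ⊆ U) (V : BView α) (hV : vrestrict V U = Wu)
    (H T : Set α) :
    sat (.K l) V H T ↔ sat (reduct Wu U (.K l)) (vrestrict V Uᶜ) (H ∩ Uᶜ) (T ∩ Uᶜ) := by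
  have hKatoms : (EForm.K l).atoms ⊆ U := hl
  have h1 : sat (.K l) V H T ↔ sat (.K l) Wu (H ∩ U) (T ∩ U) := by
    rw [← hV]; exact sat_restrict _ hKatoms V H T
  have h2 : sat (.K l) Wu (H ∩ U) (T ∩ U) ↔ epSat Wu (.K l) := satK_iff_epSat
  by_cases he : epSat Wu (.K l)
  · simp only [reduct, if_pos hl, if_pos he]
    constructor
    · intro _; exact sat_top _ _ _
    · intro _; exact h1.2 (h2.2 he)
  · simp only [reduct, if_pos hl, if_neg he]
    constructor
    · intro hh; exact absurd (h2.1 (h1.1 hh)) he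
    · intro hh; exact absurd hh (by simp [sat])

lemma sat_reduct {U : Set α} {Wu : BView α} (hWu : totalView Wu) :
    ∀ {φ : EForm α}, Good U φ → ∀ (V : BView α), vrestrict V U = Wu →
      ∀ (H T : Set α),
      (sat φ V H T ↔ sat (reduct Wu U φ) (vrestrict V Uᶜ) (H ∩ Uᶜ) (T ∩ Uᶜ)) := by
  intro φ hφ
  induction hφ with
  | base hnoK hatoms =>
      intro V hV H T
      rw [reduct_noK hnoK]
      exact sat_restrict _ hatoms V H T
  | and_ _ _ ih1 ih2 =>
      intro V hV H T
      simp only [reduct, sat]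
      exact and_congr (ih1 V hV H T) (ih2 V hV H T)
  | or_ _ _ ih1 ih2 =>
      intro V hV H T
      simp only [reduct, sat]
      exact or_congr (ih1 V hV H T) (ih2 V hV H T)
  | imp_ _ _ ih1 ih2 =>
      intro V hV H T
      have hV' : vrestrict (tview V) U = Wu := by
        rw [← tview_vrestrict, hV, tview_eq_self hWu]
      simp only [reduct, sat]
      rw [tview_vrestrict]
      exact and_congr (imp_congr (ih1 V hV H T) (ih2 V hV H T))
        (imp_congr (ih1 (tview V) hV' T T) (ih2 (tview V) hV' T T))
  | Kin hnoK hatoms =>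
      intro V hV H T
      exact sat_reduct_K hWu hatoms V hV H T
  | Kout hnoK hatoms =>
      rename_i l
      intro V hV H T
      by_cases hl : l.atoms ⊆ U
      · exact sat_reduct_K hWu hl V hV H T
      · simp only [reduct, if_neg hl, reduct_noK hnoK]
        simp only [sat]
        constructor
        · rintro hall j ⟨k, hk, rfl⟩
          exact (sat_restrict _ hatoms V k.1 k.2).1 (hall k hk)
        · intro hall i hi
          exact (sat_restrict _ hatoms V i.1 i.2).2 (hall _ (mem_vrestrict_of hi))

lemma epSat_restrict {S : Set α} {φ : EForm α} (h : φ.atoms ⊆ S) (V : BView α) :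
    epSat V φ ↔ epSat (vrestrict V S) φ := by
  constructor
  · rintro he j ⟨k, hk, rfl⟩
    exact (sat_restrict φ h V k.1 k.2).1 (he k hk)
  · intro he i hi
    exact (sat_restrict φ h V i.1 i.2).2 (he _ (mem_vrestrict_of hi))

lemma epSat_reduct {U : Set α} {Wu : BView α} (hWu : totalView Wu)
    {φ : EForm α} (hφ : Good U φ) (V : BView α) (hV : vrestrict V U = Wu) :
    epSat V φ ↔ epSat (vrestrict V Uᶜ) (reduct Wu U φ) := by
  constructor
  · rintro he j ⟨k, hk, rfl⟩
    exact (sat_reduct hWu hφ V hV k.1 k.2).1 (he k hk)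
  · intro he i hi
    exact (sat_reduct hWu hφ V hV i.1 i.2).2 (he _ (mem_vrestrict_of hi))

lemma atoms_disjForm : ∀ (l : List α), (disjForm l).atoms = {a | a ∈ l} := by
  intro l
  induction l with
  | nil => simp [disjForm, EForm.atoms]
  | cons a l ih =>
      simp only [disjForm, EForm.atoms, ih]
      ext b; simp [eq_comm]

lemma atoms_conjForm : ∀ (L : List (EForm α)) (a : α),
    a ∈ (conjForm L).atoms ↔ ∃ φ ∈ L, a ∈ φ.atoms := by
  intro L
  induction L with
  | nil => intro a; simp [conjForm, EForm.top, EForm.neg, EForm.atoms]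
  | cons φ L ih =>
      intro a
      simp only [conjForm, EForm.atoms, Set.mem_union, ih]
      simp

lemma noK_disjForm : ∀ (l : List α), noK (disjForm l) := by
  intro l
  induction l with
  | nil => trivial
  | cons a l ih => exact ⟨trivial, ih⟩

lemma noK_top : noK (EForm.top (α := α)) := ⟨trivial, trivial⟩

lemma noK_atomBase {φ : EForm α} (h : isAtomBase φ) : noK φ := by
  rcases h with ⟨a, rfl⟩ | rfl | rfl
  · trivial
  · exact noK_top
  · trivial

lemma noK_objLit {φ : EForm α} (h : isObjLit φ) : noK φ := by
  rcases h with h | ⟨ψ, hψ, rfl⟩ | ⟨ψ, hψ, rfl⟩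
  · exact noK_atomBase h
  · exact ⟨noK_atomBase hψ, trivial⟩
  · exact ⟨⟨noK_atomBase hψ, trivial⟩, trivial⟩

lemma atoms_top : (EForm.top (α := α)).atoms = ∅ := by
  simp [EForm.top, EForm.neg, EForm.atoms]

lemma atoms_atomBase {φ : EForm α} (h : isAtomBase φ) :
    φ.atoms = ∅ ∨ ∃ a, φ.atoms = {a} := by
  rcases h with ⟨a, rfl⟩ | rfl | rfl
  · exact Or.inr ⟨a, rfl⟩
  · exact Or.inl atoms_top
  · exact Or.inl rfl

lemma atoms_objLit {φ : EForm α} (h : isObjLit φ) :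
    φ.atoms = ∅ ∨ ∃ a, φ.atoms = {a} := by
  have hneg : ∀ (ψ : EForm α), (EForm.neg ψ).atoms = ψ.atoms := by
    intro ψ; simp [EForm.neg, EForm.atoms]
  rcases h with h | ⟨ψ, hψ, rfl⟩ | ⟨ψ, hψ, rfl⟩
  · exact atoms_atomBase h
  · rw [hneg]; exact atoms_atomBase hψ
  · rw [hneg, hneg]; exact atoms_atomBase hψ

lemma objLit_atoms_cases {U : Set α} {φ : EForm α} (h : isObjLit φ) :
    φ.atoms ⊆ U ∨ φ.atoms ⊆ Uᶜ := by
  rcases atoms_objLit h with he | ⟨a, ha⟩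
  · left; rw [he]; exact Set.empty_subset _
  · by_cases haU : a ∈ U
    · left; rw [ha]; simpa using haU
    · right; rw [ha]; simpa using haU

lemma Good_subjLit {U : Set α} {φ : EForm α} (h : isSubjLit φ) : Good U φ := by
  have hbot : Good U (.bot : EForm α) := Good.base trivial (Set.empty_subset _)
  have hK : ∀ (l : EForm α), isObjLit l → Good U (.K l) := by
    intro l hl
    rcases objLit_atoms_cases (U := U) hl with hc | hc
    · exact Good.Kin (noK_objLit hl) hc
    · exact Good.Kout (noK_objLit hl) hc
  rcases h with ⟨l, hl, rfl⟩ | ⟨l, hl, rfl⟩ | ⟨l, hl, rfl⟩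
  · exact hK l hl
  · exact Good.imp_ (hK l hl) hbot
  · exact Good.imp_ (Good.imp_ (hK l hl) hbot) hbot

lemma Good_rule {U : Set α} {r : ERule α} (hwf : r.wf)
    (hr : (r.objBodyAtoms ∪ r.headAtoms) ∩ U = ∅) : Good U r.form := by
  have hhead : Good U (disjForm r.head) := by
    refine Good.base (noK_disjForm _) ?_
    intro a ha
    rw [atoms_disjForm] at ha
    intro haU
    have : a ∈ (r.objBodyAtoms ∪ r.headAtoms) ∩ U := ⟨Or.inr ha, haU⟩
    rw [hr] at this; exact this
  have hbody : ∀ (L : List (EForm α)), (∀ φ ∈ L, φ ∈ r.body) → Good U (conjForm L) := by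
    intro L
    induction L with
    | nil =>
        intro _
        exact Good.imp_ (Good.base trivial (Set.empty_subset _))
          (Good.base trivial (Set.empty_subset _))
    | cons φ L ih =>
        intro hmem
        have hφr : φ ∈ r.body := hmem φ (by simp)
        refine Good.and_ ?_ (ih fun ψ hψ => hmem ψ (by simp [hψ]))
        rcases hwf φ hφr with hobj | hsub
        · refine Good.base (noK_objLit hobj) ?_
          intro a ha haU
          have : a ∈ (r.objBodyAtoms ∪ r.headAtoms) ∩ U :=
            ⟨Or.inl ⟨φ, hφr, hobj, ha⟩, haU⟩
          rw [hr] at this; exact this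
        · exact Good_subjLit hsub
  exact Good.imp_ (hbody r.body fun _ h => h) hhead

lemma reduct_conjForm {W : BView α} {U : Set α} :
    ∀ (L : List (EForm α)), reduct W U (conjForm L) = conjForm (L.map (reduct W U)) := by
  intro L
  induction L with
  | nil => rfl
  | cons φ L ih => simp only [conjForm, List.map, reduct, ih]

lemma reduct_form {W : BView α} {U : Set α} (r : ERule α) :
    reduct W U r.form = (ruleReduct W U r).form := by
  simp only [ERule.form, ruleReduct, reduct, reduct_conjForm,
    reduct_noK (noK_disjForm r.head)]

lemma epModel_progTheory {V : BView α} {P : EProgram α} :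
    epModel V (progTheory P) ↔ isBView V ∧ ∀ r ∈ P, epSat V r.form := by
  simp [epModel, progTheory, Set.forall_mem_image]

lemma form_atoms {r : ERule α} : (r.form).atoms ⊆ r.atoms := by
  intro a ha
  simp only [ERule.form, EForm.atoms, Set.mem_union] at ha
  rcases ha with ha | ha
  · rw [atoms_conjForm] at ha
    exact Or.inr ha
  · rw [atoms_disjForm] at ha
    exact Or.inl ha

lemma isBView_vrestrict {V : BView α} (h : isBView V) (S : Set α) :
    isBView (vrestrict V S) := by
  obtain ⟨⟨i, hi⟩, hwf⟩ := h
  refine ⟨⟨_, mem_vrestrict_of hi⟩, ?_⟩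
  rintro j ⟨k, hk, rfl⟩
  exact Set.inter_subset_inter_left S (hwf k hk)

lemma epSat_B_iff {U : Set α} {r : ERule α} (hr : r.atoms ⊆ U) (V : BView α) :
    epSat V r.form ↔ epSat (vrestrict V U) r.form :=
  epSat_restrict (form_atoms.trans hr) V

lemma epSat_T_iff {U : Set α} {Wu : BView α} (hWu : totalView Wu)
    {r : ERule α} (hG : Good U r.form) {V : BView α} (hV : vrestrict V U = Wu) :
    epSat V r.form ↔ epSat (vrestrict V Uᶜ) ((ruleReduct Wu U r).form) := by
  rw [← reduct_form]
  exact epSat_reduct hWu hG V hV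

/-- Mix: total part of `W` outside `S`, `V` inside `S`. -/
def mix (W : BView α) (S : Set α) (V : BView α) : BView α :=
  {p | ∃ i ∈ W, ∃ Hs, (Hs, i.2 ∩ S) ∈ V ∧ p = (Hs ∪ i.2 ∩ Sᶜ, i.2)}

section Mix

variable {W V : BView α} {S : Set α}

lemma mix_aux (hW : totalView W) (hle : viewLE V (vrestrict W S)) :
    ∀ q ∈ V, q.1 ⊆ q.2 ∧ q.2 ⊆ S ∧ ∃ i ∈ W, q.2 = i.2 ∩ S := by
  intro q hq
  obtain ⟨H2, hH2, hsub⟩ := hle.2 q hq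
  obtain ⟨i, hi, heq⟩ := hH2
  have h1 : H2 = i.1 ∩ S := congrArg Prod.fst heq
  have h2 : q.2 = i.2 ∩ S := congrArg Prod.snd heq
  have h12 : H2 = q.2 := by rw [h1, h2, hW i hi]
  refine ⟨h12 ▸ hsub, ?_, ⟨i, hi, h2⟩⟩
  rw [h2]; exact Set.inter_subset_right

lemma mem_mix_self (hW : totalView W) (hle : viewLE V (vrestrict W S))
    {i : Set α × Set α} (hi : i ∈ W) :
    ∃ Hs, (Hs, i.2 ∩ S) ∈ V ∧ (Hs ∪ i.2 ∩ Sᶜ, i.2) ∈ mix W S V := by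
  obtain ⟨H1, hH1, _⟩ := hle.1 _ (mem_vrestrict_of hi)
  exact ⟨H1, hH1, ⟨i, hi, H1, hH1, rfl⟩⟩

lemma mix_wf (hW : totalView W) (hle : viewLE V (vrestrict W S)) :
    ∀ p ∈ mix W S V, p.1 ⊆ p.2 := by
  rintro p ⟨i, hi, Hs, hHs, rfl⟩
  have h := mix_aux hW hle _ hHs
  intro a ha
  rcases ha with ha | ha
  · exact (h.1 ha).1
  · exact ha.1

lemma mix_restrict_self (hW : totalView W) (hle : viewLE V (vrestrict W S)) :
    vrestrict (mix W S V) S = V := by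
  ext q
  constructor
  · rintro ⟨p, ⟨i, hi, Hs, hHs, rfl⟩, rfl⟩
    have h := mix_aux hW hle _ hHs
    have hHsS : Hs ⊆ S := (h.1).trans h.2.1
    have : (Hs ∪ i.2 ∩ Sᶜ) ∩ S = Hs := by
      ext a
      constructor
      · rintro ⟨ha | ha, haS⟩
        · exact ha
        · exact absurd haS ha.2
      · intro ha; exact ⟨Or.inl ha, hHsS ha⟩
    simpa [this]
  · intro hq
    have h := mix_aux hW hle _ hq
    obtain ⟨i, hi, h2⟩ := h.2.2
    have hmem : (q.1 ∪ i.2 ∩ Sᶜ, i.2) ∈ mix W S V := ⟨i, hi, q.1, by rw [← h2]; exact hq, rfl⟩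
    refine ⟨_, hmem, ?_⟩
    have hq1S : q.1 ⊆ S := h.1.trans h.2.1
    have h1 : (q.1 ∪ i.2 ∩ Sᶜ) ∩ S = q.1 := by
      ext a
      constructor
      · rintro ⟨ha | ha, haS⟩
        · exact ha
        · exact absurd haS ha.2
      · intro ha; exact ⟨Or.inl ha, hq1S ha⟩
    simp only [h1, ← h2]

lemma mix_restrict_compl (hW : totalView W) (hle : viewLE V (vrestrict W S)) :
    vrestrict (mix W S V) Sᶜ = vrestrict W Sᶜ := by
  have key : ∀ Hs (i : Set α × Set α), i ∈ W → (Hs, i.2 ∩ S) ∈ V →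
      (Hs ∪ i.2 ∩ Sᶜ) ∩ Sᶜ = i.2 ∩ Sᶜ := by
    intro Hs i hi hHs
    have h := mix_aux hW hle _ hHs
    have hHsS : Hs ⊆ S := h.1.trans h.2.1
    ext a
    constructor
    · rintro ⟨ha | ha, haS⟩
      · exact absurd (hHsS ha) haS
      · exact ha
    · intro ha; exact ⟨Or.inr ha, ha.2⟩
  ext q
  constructor
  · rintro ⟨p, ⟨i, hi, Hs, hHs, rfl⟩, rfl⟩
    refine ⟨i, hi, ?_⟩
    simp only [key Hs i hi hHs, hW i hi]
  · rintro ⟨i, hi, rfl⟩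
    obtain ⟨Hs, hHs, hmem⟩ := mem_mix_self hW hle hi
    refine ⟨_, hmem, ?_⟩
    simp only [key Hs i hi hHs, hW i hi]

lemma tview_mix (hW : totalView W) (hle : viewLE V (vrestrict W S)) :
    tview (mix W S V) = W := by
  ext q
  constructor
  · rintro ⟨p, ⟨i, hi, Hs, hHs, rfl⟩, rfl⟩
    have : ((Hs ∪ i.2 ∩ Sᶜ, i.2) : Set α × Set α).2 = i.2 := rfl
    show ((i.2 : Set α), (i.2 : Set α)) ∈ W
    have := hW i hi
    have heq : ((i.2 : Set α), (i.2 : Set α)) = i := by simp [Prod.ext_iff, this]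
    rwa [heq]
  · intro hq
    obtain ⟨Hs, hHs, hmem⟩ := mem_mix_self hW hle hq
    refine ⟨_, hmem, ?_⟩
    show ((q.2 : Set α), (q.2 : Set α)) = q
    simp [Prod.ext_iff, hW q hq]

lemma mix_viewLE (hW : totalView W) (hle : viewLE V (vrestrict W S)) :
    viewLE (mix W S V) W := by
  constructor
  · intro i hi
    obtain ⟨Hs, hHs, hmem⟩ := mem_mix_self hW hle hi
    refine ⟨_, hmem, ?_⟩
    have h := mix_aux hW hle _ hHs
    rw [hW i hi]
    intro a ha
    rcases ha with ha | ha
    · exact (h.1 ha).1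
    · exact ha.1
  · rintro p ⟨i, hi, Hs, hHs, rfl⟩
    refine ⟨i.2, ?_, ?_⟩
    · have heq : ((i.2 : Set α), (i.2 : Set α)) = i := by simp [Prod.ext_iff, hW i hi]
      show ((i.2 : Set α), (i.2 : Set α)) ∈ W
      rwa [heq]
    · have h := mix_aux hW hle _ hHs
      intro a ha
      rcases ha with ha | ha
      · exact (h.1 ha).1
      · exact ha.1

lemma mix_nonempty (hW : totalView W) (hle : viewLE V (vrestrict W S))
    (hne : W.Nonempty) : (mix W S V).Nonempty := by
  obtain ⟨i, hi⟩ := hne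
  obtain ⟨Hs, hHs, hmem⟩ := mem_mix_self hW hle hi
  exact ⟨_, hmem⟩

end Mix

/-- If `W'` has total view `W`, and is total on a set `A` covering the head of `r`,
then satisfaction of `r` at `W` transfers to `W'`. -/
lemma epSat_total_side {W W' : BView α} (hwf' : ∀ i ∈ W', i.1 ⊆ i.2)
    (ht : tview W' = W) {r : ERule α} (hsat : epSat W r.form)
    {A : Set α} (hhead : r.headAtoms ⊆ A)
    (hres : vrestrict W' A = vrestrict W A) (htotA : totalView (vrestrict W A)) :
    epSat W' r.form := by
  intro p hp
  have hpW : ((p.2 : Set α), (p.2 : Set α)) ∈ W := by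
    rw [← ht]; exact ⟨p, hp, rfl⟩
  have hsatp := hsat _ hpW
  have hheadatoms : (disjForm r.head).atoms ⊆ A := by
    rw [atoms_disjForm]; exact hhead
  have hAeq : p.1 ∩ A = p.2 ∩ A := by
    have : (p.1 ∩ A, p.2 ∩ A) ∈ vrestrict W A := by
      rw [← hres]; exact mem_vrestrict_of hp
    exact htotA _ this
  simp only [ERule.form, sat] at hsatp ⊢
  constructor
  · intro hb
    have hb' : sat (conjForm r.body) (tview W') p.2 p.2 :=
      sat_persist _ W' p.1 p.2 hwf' (hwf' p hp) hb
    rw [ht] at hb'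
    have hh : sat (disjForm r.head) W p.2 p.2 := hsatp.1 hb'
    have h1 : sat (disjForm r.head) (vrestrict W A) (p.2 ∩ A) (p.2 ∩ A) :=
      (sat_restrict _ hheadatoms W p.2 p.2).1 hh
    have h2 : sat (disjForm r.head) (vrestrict W' A) (p.1 ∩ A) (p.2 ∩ A) := by
      rw [hres, hAeq]; exact h1
    exact (sat_restrict _ hheadatoms W' p.1 p.2).2 h2
  · rw [ht]
    exact hsatp.1

lemma restrict_viewLE {W W' : BView α} (hle : viewLE W' W) (S : Set α) :
    viewLE (vrestrict W' S) (vrestrict W S) := by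
  constructor
  · rintro j ⟨i, hi, rfl⟩
    obtain ⟨H1, hH1, hsub⟩ := hle.1 i hi
    refine ⟨H1 ∩ S, ⟨(H1, i.2), hH1, rfl⟩, Set.inter_subset_inter_left S hsub⟩
  · rintro j ⟨p, hp, rfl⟩
    obtain ⟨H2, hH2, hsub⟩ := hle.2 p hp
    refine ⟨H2 ∩ S, ⟨(H2, p.2), hH2, rfl⟩, Set.inter_subset_inter_left S hsub⟩

lemma wf_of_viewLE {W W' : BView α} (hW : totalView W) (hle : viewLE W' W) :
    ∀ p ∈ W', p.1 ⊆ p.2 ∧ ((p.2 : Set α), (p.2 : Set α)) ∈ W := by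
  intro p hp
  obtain ⟨H2, hH2, hsub⟩ := hle.2 p hp
  have : H2 = p.2 := hW _ hH2
  rw [this] at hsub hH2
  exact ⟨hsub, hH2⟩

lemma tview_of_viewLE {W W' : BView α} (hW : totalView W) (hle : viewLE W' W) :
    tview W' = W := by
  ext q
  constructor
  · rintro ⟨p, hp, rfl⟩
    exact (wf_of_viewLE hW hle p hp).2
  · intro hq
    obtain ⟨H1, hH1, _⟩ := hle.1 q hq
    refine ⟨(H1, q.2), hH1, ?_⟩
    show ((q.2 : Set α), (q.2 : Set α)) = q
    simp [Prod.ext_iff, hW q hq]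

lemma eq_of_restricts {W W' : BView α} {U : Set α} (hW : totalView W)
    (hle : viewLE W' W) (hU' : vrestrict W' U = vrestrict W U)
    (hUc : vrestrict W' Uᶜ = vrestrict W Uᶜ) : W' = W := by
  have htotU : totalView (vrestrict W U) := totalView_vrestrict hW U
  have htotUc : totalView (vrestrict W Uᶜ) := totalView_vrestrict hW Uᶜ
  have htot' : totalView W' := by
    intro p hp
    have h1 : p.1 ∩ U = p.2 ∩ U := htotU _ (hU' ▸ mem_vrestrict_of hp)
    have h2 : p.1 ∩ Uᶜ = p.2 ∩ Uᶜ := htotUc _ (hUc ▸ mem_vrestrict_of hp)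
    ext a
    by_cases haU : a ∈ U
    · constructor
      · intro ha
        have : a ∈ p.2 ∩ U := h1 ▸ (Set.mem_inter ha haU)
        exact this.1
      · intro ha
        have : a ∈ p.1 ∩ U := h1.symm ▸ (Set.mem_inter ha haU)
        exact this.1
    · constructor
      · intro ha
        have : a ∈ p.2 ∩ Uᶜ := h2 ▸ (Set.mem_inter ha haU)
        exact this.1
      · intro ha
        have : a ∈ p.1 ∩ Uᶜ := h2.symm ▸ (Set.mem_inter ha haU)
        exact this.1
  ext p
  constructor
  · intro hp
    have h := wf_of_viewLE hW hle p hp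
    have : ((p.2 : Set α), (p.2 : Set α)) = p := by simp [Prod.ext_iff, htot' p hp]
    rw [← this]; exact h.2
  · intro hp
    obtain ⟨H1, hH1, hsub⟩ := hle.1 p hp
    have : H1 = p.2 := htot' _ hH1
    rw [this] at hH1
    have heq : ((p.2 : Set α), p.2) = p := by simp [Prod.ext_iff, hW p hp]
    rwa [heq] at hH1

end Lemmas

/-- W is a FEEL-world view of Π iff W|_U is a FEEL-world view of
B_U(Π) and W|_Ū is a FEEL-world view of E_U(Π,W|_U). -/
theorem stmt8 {α : Type} (P : EProgram α) (hwf : progWF P) (U : Set α)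
    (hU : splittingSet P U) (B Tp : EProgram α) (hBT : isSplitting P U B Tp)
    (W : BView α) (hW : totalView W) :
    FEEL (progTheory P) W ↔
      FEEL (progTheory B) (vrestrict W U) ∧
      FEEL (progTheory (EU Tp (vrestrict W U) U)) (vrestrict W Uᶜ) := by
  obtain ⟨hBTdisj, hBTunion, hBatoms, hTdisj⟩ := hBT
  have hBsub : B ⊆ P := by rw [← hBTunion]; exact Set.subset_union_left
  have hTsub : Tp ⊆ P := by rw [← hBTunion]; exact Set.subset_union_right
  have htotWu : totalView (vrestrict W U) := totalView_vrestrict hW U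
  have htotWv : totalView (vrestrict W Uᶜ) := totalView_vrestrict hW Uᶜ
  have hGood : ∀ r ∈ Tp, Good U r.form := fun r hr =>
    Good_rule (hwf r (hTsub hr)) (hTdisj r hr)
  have hThead : ∀ r ∈ Tp, r.headAtoms ⊆ Uᶜ := by
    intro r hr a ha haU
    have : a ∈ (r.objBodyAtoms ∪ r.headAtoms) ∩ U := ⟨Or.inr ha, haU⟩
    rw [hTdisj r hr] at this; exact this
  have hBhead : ∀ r ∈ B, r.headAtoms ⊆ U := by
    intro r hr
    refine Set.Subset.trans ?_ (hBatoms r hr)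
    intro a ha
    exact Or.inl ha
  have hmodels : ∀ V : BView α, vrestrict V U = vrestrict W U →
      ((∀ r ∈ P, epSat V r.form) ↔
        ((∀ r ∈ B, epSat (vrestrict V U) r.form) ∧
         (∀ r ∈ Tp, epSat (vrestrict V Uᶜ) ((ruleReduct (vrestrict W U) U r).form)))) := by
    intro V hV
    constructor
    · intro h
      exact ⟨fun r hr => (epSat_B_iff (hBatoms r hr) V).1 (h r (hBsub hr)),
        fun r hr => (epSat_T_iff htotWu (hGood r hr) hV).1 (h r (hTsub hr))⟩
    · rintro ⟨h1, h2⟩ r hr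
      rw [← hBTunion] at hr
      rcases hr with hr | hr
      · exact (epSat_B_iff (hBatoms r hr) V).2 (h1 r hr)
      · exact (epSat_T_iff htotWu (hGood r hr) hV).2 (h2 r hr)
  have hEUmodel : ∀ V' : BView α,
      epModel V' (progTheory (EU Tp (vrestrict W U) U)) ↔
      (isBView V' ∧ ∀ r ∈ Tp, epSat V' ((ruleReduct (vrestrict W U) U r).form)) := by
    intro V'
    rw [epModel_progTheory]
    simp [EU, Set.forall_mem_image]
  constructor
  · rintro ⟨_, hM, hmin⟩
    obtain ⟨hBV, hsatW⟩ := epModel_progTheory.1 hM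
    have hparts := (hmodels W rfl).1 hsatW
    refine ⟨⟨htotWu, epModel_progTheory.2 ⟨isBView_vrestrict hBV U, hparts.1⟩, ?_⟩,
      ⟨htotWv, (hEUmodel _).2 ⟨isBView_vrestrict hBV Uᶜ, hparts.2⟩, ?_⟩⟩
    · -- minimality of W|_U for B
      intro V hVmod hVlt
      obtain ⟨hVbv, hVsat⟩ := epModel_progTheory.1 hVmod
      have hle : viewLE V (vrestrict W U) := hVlt.1
      have hwf₁ := mix_wf hW hle
      have ht₁ := tview_mix hW hle
      have hrU : vrestrict (mix W U V) U = V := mix_restrict_self hW hle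
      have hrUc : vrestrict (mix W U V) Uᶜ = vrestrict W Uᶜ := mix_restrict_compl hW hle
      have hmod₁ : epModel (mix W U V) (progTheory P) := by
        refine epModel_progTheory.2 ⟨⟨mix_nonempty hW hle hBV.1, hwf₁⟩, ?_⟩
        intro r hr
        rw [← hBTunion] at hr
        rcases hr with hr | hr
        · refine (epSat_B_iff (hBatoms r hr) _).2 ?_
          rw [hrU]; exact hVsat r hr
        · exact epSat_total_side hwf₁ ht₁ (hsatW r (hTsub hr)) (hThead r hr) hrUc htotWv
      refine hmin (mix W U V) hmod₁ ⟨mix_viewLE hW hle, ?_⟩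
      intro heq
      apply hVlt.2
      rw [← hrU, heq]
    · -- minimality of W|_Uᶜ for EU
      intro V' hV'mod hV'lt
      obtain ⟨hV'bv, hV'sat⟩ := (hEUmodel _).1 hV'mod
      have hle' : viewLE V' (vrestrict W Uᶜ) := hV'lt.1
      have hwf₂ := mix_wf hW hle'
      have ht₂ := tview_mix hW hle'
      have hrUc' : vrestrict (mix W Uᶜ V') Uᶜ = V' := mix_restrict_self hW hle'
      have hrU' : vrestrict (mix W Uᶜ V') U = vrestrict W U := by
        have := mix_restrict_compl hW hle'
        rwa [compl_compl] at this
      have hmod₂ : epModel (mix W Uᶜ V') (progTheory P) := by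
        refine epModel_progTheory.2 ⟨⟨mix_nonempty hW hle' hBV.1, hwf₂⟩, ?_⟩
        intro r hr
        rw [← hBTunion] at hr
        rcases hr with hr | hr
        · exact epSat_total_side hwf₂ ht₂ (hsatW r (hBsub hr)) (hBhead r hr) hrU' htotWu
        · refine (epSat_T_iff htotWu (hGood r hr) hrU').2 ?_
          rw [hrUc']; exact hV'sat r hr
      refine hmin (mix W Uᶜ V') hmod₂ ⟨mix_viewLE hW hle', ?_⟩
      intro heq
      apply hV'lt.2
      rw [← hrUc', heq]
  · rintro ⟨⟨_, hMB, hminB⟩, ⟨_, hMT, hminT⟩⟩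
    obtain ⟨hBVu, hsatB⟩ := epModel_progTheory.1 hMB
    obtain ⟨hBVv, hsatT⟩ := (hEUmodel _).1 hMT
    have hBW : isBView W := by
      refine ⟨?_, fun i hi => (hW i hi).subset⟩
      obtain ⟨j, hj⟩ := hBVu.1
      obtain ⟨i, hi, _⟩ := hj
      exact ⟨i, hi⟩
    refine ⟨hW, epModel_progTheory.2 ⟨hBW, (hmodels W rfl).2 ⟨hsatB, hsatT⟩⟩, ?_⟩
    intro W₁ hmod₁ hlt₁
    obtain ⟨hbv₁, hsat₁⟩ := epModel_progTheory.1 hmod₁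
    have hle₁ : viewLE W₁ W := hlt₁.1
    by_cases hUeq : vrestrict W₁ U = vrestrict W U
    · by_cases hUceq : vrestrict W₁ Uᶜ = vrestrict W Uᶜ
      · exact hlt₁.2 (eq_of_restricts hW hle₁ hUeq hUceq)
      · refine hminT (vrestrict W₁ Uᶜ) ?_ ⟨restrict_viewLE hle₁ Uᶜ, hUceq⟩
        exact (hEUmodel _).2 ⟨isBView_vrestrict hbv₁ Uᶜ,
          fun r hr => (epSat_T_iff htotWu (hGood r hr) hUeq).1 (hsat₁ r (hTsub hr))⟩
    · refine hminB (vrestrict W₁ U) ?_ ⟨restrict_viewLE hle₁ U, hUeq⟩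
      exact epModel_progTheory.2 ⟨isBView_vrestrict hbv₁ U,
        fun r hr => (epSat_B_iff (hBatoms r hr) W₁).1 (hsat₁ r (hBsub hr))⟩
end Epist
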